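/- arXiv:math/0404430 — 3 statements merged into one kernel-verified Lean document; each statement's English description precedes it below -/
import Mathlib

section
/- Let n = k. Then every X ∈ 𝒳_k(d,k) satisfies |ret_k(X)| = d, and ℱ(d,k,k) is exactly the collection of d-element Gale subsets of [0,k] (these are the vertex sets of facets of the cyclic d-polytope with k+1 vertices). -/
noncomputable section

open Finset

/-- `retr n X` : the retraction of `X`, clamping each element into `[0,n]`. -/
def retr (n : ℤ) (X : Finset ℤ) : Finset ℤ := X.image fun x => max 0 (min n x)

/-- A finite set is paired if it is a disjoint union of pairs `{y, y+1}`
of consecutive integers. -/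
def IsPaired (Y : Finset ℤ) : Prop :=
  ∃ S : Finset ℤ, Y = S ∪ S.image (· + 1) ∧ ∀ a ∈ S, ∀ b ∈ S, a ≠ b → 2 ≤ |a - b|

/-- Membership in the collection `𝒳_n(d,k)` where `d = 2m+1`:
`X = [i, i+2r-1] ∪ Y ∪ [i+k, i+k+2r-1]` with `1 ≤ r ≤ m`, `Y` a paired
`(d-2r-1)`-element subset of `[i+2r+1, i+k-2]`, and `|ret_n(X)| ≥ d`. -/
def MemX (m k n : ℕ) (X : Finset ℤ) : Prop :=
  ∃ (i : ℤ) (r : ℕ) (Y : Finset ℤ), 1 ≤ r ∧ r ≤ m ∧ IsPaired Y ∧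
    Y.card = 2 * (m - r) ∧ Y ⊆ Finset.Icc (i + 2 * r + 1) (i + k - 2) ∧
    X = Finset.Icc i (i + 2 * r - 1) ∪ Y ∪ Finset.Icc (i + k) (i + k + 2 * r - 1) ∧
    2 * m + 1 ≤ (retr n X).card

/-- `ℱ(d,k,n)` with `d = 2m+1` : the vertex sets of facets of the ordinary
polytope `P^{d,k,n}` (Dinh's theorem). -/
def Facets (m k n : ℕ) : Set (Finset ℤ) :=
  {F | ∃ X : Finset ℤ, MemX m k n X ∧ F = retr n X}

/-- Colexicographic order on finite sets of integers: `F ≺_c G` iff the maximal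
element of the symmetric difference belongs to `G`. -/
def ColexLt (F G : Finset ℤ) : Prop :=
  ∃ z ∈ G, z ∉ F ∧ ∀ w, z < w → (w ∈ F ↔ w ∈ G)

/-- `S` is a Gale subset of `[a,b]`: `S ⊆ [a,b]` and between any two elements of
`[a,b] \ S` there is an even number of elements of `S`. -/
def IsGale (a b : ℤ) (S : Finset ℤ) : Prop :=
  S ⊆ Finset.Icc a b ∧
    ∀ x ∈ Finset.Icc a b, ∀ y ∈ Finset.Icc a b,
      x ∉ S → y ∉ S → x < y → Even ((S ∩ Finset.Ioo x y).card)

/-- The maximal interval (run) of consecutive integers of `F` containing `x`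
(empty if `x ∉ F`). -/
def runOf (F : Finset ℤ) (x : ℤ) : Finset ℤ :=
  F.filter fun y => Finset.Icc (min x y) (max x y) ⊆ F

/-- The maximum element of `F` (0 by convention if `F` is empty). -/
def maxElt (F : Finset ℤ) : ℤ := WithBot.unbotD 0 F.max

/-- `E(S)` : the union over the maximal intervals `[a,b]` of `S` of
`{a+1, a+3, a+5, …} ∩ [a,b]` (the elements in even position of their run). -/
def Epos (S : Finset ℤ) : Finset ℤ :=
  @Finset.filter _
    (fun y => ∃ a : ℤ, Finset.Icc a y ⊆ S ∧ a - 1 ∉ S ∧ Odd (y - a))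
    (Classical.decPred _) S

/-- `A^0(F)` for `F ∈ ℱ(d,k,n)`. -/
def A0 (k n : ℤ) (F : Finset ℤ) : Finset ℤ :=
  if maxElt F ≤ k - 1 then runOf F 0
  else if maxElt F ≤ n - 1 then runOf F (maxElt F - k) ∪ runOf F (maxElt F - k + 2)
  else if n - k ∈ F then runOf F (n - k)
  else ∅

/-- `G_F = E(I^1) ∪ ⋯ ∪ E(I^p) ∪ I^n(F)` where `I^1, …, I^p` are the maximal
intervals of `F` disjoint from `A^0(F) ∪ I^n(F)`, and `I^n(F) = runOf F n`. -/
def GF (k n : ℤ) (F : Finset ℤ) : Finset ℤ :=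
  Epos (F \ (A0 k n F ∪ runOf F n)) ∪ runOf F n

/-- The `t`-th smallest element of `F` (1-indexed). -/
def elt (F : Finset ℤ) (t : ℕ) : ℤ := (F.sort (· ≤ ·)).getD (t - 1) 0

/-- The vertex set of the `t`-th ridge of `P^{d,k,n}` contained in the facet `F`
(with `F = {z_1 < ⋯ < z_p}`, `1 ≤ t ≤ p`):
`F(ẑ_1) = {z_1, …, z_{d-1}}`, `F(ẑ_p) = {z_{p-d+2}, …, z_p}`, and otherwise
`F(ẑ_t) = {z_ℓ : 0 < |ℓ - t| ≤ d-2}`. -/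
def ridge (d : ℕ) (F : Finset ℤ) (t : ℕ) : Finset ℤ :=
  if t = 1 then (Finset.Icc 1 (d - 1)).image (elt F)
  else if t = F.card then (Finset.Icc (F.card - d + 2) F.card).image (elt F)
  else ((Finset.Icc 1 F.card).filter fun l =>
      l ≠ t ∧ ((l : ℤ) - (t : ℤ)).natAbs ≤ d - 2).image (elt F)

/-- `T_{F,ℓ} = {z_ℓ, z_{ℓ+1}, …, z_{ℓ+d-1}}` : the `d` consecutive elements of
`F` starting at position `ℓ` (1-indexed). -/
def Tsimp (d : ℕ) (F : Finset ℤ) (l : ℕ) : Finset ℤ :=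
  (Finset.Icc l (l + d - 1)).image (elt F)

/-- Helper for `U_{F,ℓ}`: `Uaux m k n F j = U_{F, (p-d+1)-j}` where `p = |F|`,
`d = 2m+1`. -/
def Uaux (m k n : ℕ) (F : Finset ℤ) : ℕ → Finset ℤ
  | 0 => GF k n F
  | j + 1 =>
    (Uaux m k n F j \ {maxElt (Tsimp (2 * m + 1) F (F.card - (2 * m + 1) + 1 - j))}) ∪
      {maxElt (Tsimp (2 * m + 1) F (F.card - (2 * m + 1) + 1 - j)) - (k : ℤ),
       maxElt (Tsimp (2 * m + 1) F (F.card - (2 * m + 1) + 1 - j)) - 1}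

/-- `U_{F,ℓ}` : `U_{F,p-d+1} = G_F` and, for `1 ≤ ℓ ≤ p-d`,
`U_{F,ℓ} = (U_{F,ℓ+1} \ {z}) ∪ {z-k, z-1}` where `z = max T_{F,ℓ+1}`. -/
def Usimp (m k n : ℕ) (F : Finset ℤ) (l : ℕ) : Finset ℤ :=
  Uaux m k n F (F.card - (2 * m + 1) + 1 - l)


lemma retr_Icc (k a b : ℤ) (hab : a ≤ b) :
    retr k (Finset.Icc a b) = Finset.Icc (max 0 (min k a)) (max 0 (min k b)) := by
  ext z
  simp only [retr, mem_image, mem_Icc]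
  constructor
  · rintro ⟨w, ⟨hw1, hw2⟩, rfl⟩; omega
  · rintro ⟨h1, h2⟩
    refine ⟨if z ≤ a then a else if b ≤ z then b else z, by omega, by omega⟩

lemma retr_eq_self (k : ℤ) (Y : Finset ℤ) (hY : ∀ y ∈ Y, 0 ≤ y ∧ y ≤ k) :
    retr k Y = Y := by
  ext z
  simp only [retr, mem_image]
  constructor
  · rintro ⟨w, hw, rfl⟩; have := hY w hw; have : max 0 (min k w) = w := by omega
    rwa [this]
  · intro hz; exact ⟨z, hz, by have := hY z hz; omega⟩

lemma retr_union (k : ℤ) (X Y : Finset ℤ) : retr k (X ∪ Y) = retr k X ∪ retr k Y :=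
  Finset.image_union _ _

/-- Y paired, nonneg, t ∉ Y : |Y ∩ [0,t]| is even. -/
lemma even_card_inter (Y : Finset ℤ) (hP : IsPaired Y) (hpos : ∀ y ∈ Y, 0 ≤ y)
    (t : ℤ) (ht : t ∉ Y) : (Y ∩ Finset.Icc 0 t).card % 2 = 0 := by
  obtain ⟨S, hYeq, hsep⟩ := hP
  have hdisj : Disjoint (S ∩ Finset.Icc 0 t) (S.image (· + 1) ∩ Finset.Icc 0 t) := by
    rw [Finset.disjoint_left]
    intro z hz1 hz2
    simp only [mem_inter, mem_image] at hz1 hz2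
    obtain ⟨s, hs, hsz⟩ := hz2.1
    have hne : s ≠ z := by omega
    have h2 := hsep s hs z hz1.1 hne
    have habs : |s - z| = 1 := by rw [show s - z = -1 by omega]; rfl
    omega
  have himg : S.image (· + 1) ∩ Finset.Icc 0 t = (S ∩ Finset.Icc 0 t).image (· + 1) := by
    ext z
    simp only [mem_inter, mem_image, mem_Icc]
    constructor
    · rintro ⟨⟨s, hs, rfl⟩, h0, hle⟩
      have hsY : s ∈ Y := by rw [hYeq]; exact mem_union_left _ hs
      exact ⟨s, ⟨hs, hpos s hsY, by omega⟩, rfl⟩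
    · rintro ⟨s, ⟨hs, h0, hle⟩, rfl⟩
      have hsY : (s : ℤ) + 1 ∈ Y := by
        rw [hYeq]; exact mem_union_right _ (mem_image_of_mem _ hs)
      refine ⟨⟨s, hs, rfl⟩, by omega, ?_⟩
      by_contra h
      have hst : s = t := by omega
      exact ht (hst ▸ (by rw [hYeq]; exact mem_union_left _ hs))
  have hYint : Y ∩ Finset.Icc 0 t =
      (S ∩ Finset.Icc 0 t) ∪ (S.image (· + 1) ∩ Finset.Icc 0 t) := by
    rw [hYeq, Finset.union_inter_distrib_right]
  rw [hYint, card_union_of_disjoint hdisj, himg,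
    Finset.card_image_of_injective _ (add_left_injective 1)]
  omega


/-- Key pairing lemma: if every element extends right when at odd position
and left when at even position, the set is paired. -/
lemma lemmaP (Y : Finset ℤ)
    (h : ∀ y ∈ Y, (Odd (Y.filter (· ≤ y)).card → y + 1 ∈ Y) ∧
      (Even (Y.filter (· ≤ y)).card → y - 1 ∈ Y)) : IsPaired Y := by
  suffices H : ∀ n (Y : Finset ℤ), Y.card = n →
      (∀ y ∈ Y, (Odd (Y.filter (· ≤ y)).card → y + 1 ∈ Y) ∧
        (Even (Y.filter (· ≤ y)).card → y - 1 ∈ Y)) → IsPaired Y from H _ Y rfl h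
  clear h Y
  intro n
  induction n using Nat.strong_induction_on with
  | _ n ih =>
  intro Y hn h
  rcases Y.eq_empty_or_nonempty with rfl | hne
  · exact ⟨∅, by simp, by simp⟩
  · set a := Y.min' hne with ha
    have haY : a ∈ Y := Y.min'_mem hne
    have hmin : ∀ z ∈ Y, a ≤ z := fun z hz => Y.min'_le z hz
    have hcnta : Y.filter (· ≤ a) = {a} := by
      ext z; simp only [mem_filter, mem_singleton]
      constructor
      · rintro ⟨hz, hle⟩; have := hmin z hz; omega
      · rintro rfl; exact ⟨haY, le_refl _⟩
    have ha1Y : a + 1 ∈ Y := by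
      refine (h a haY).1 ?_
      rw [hcnta]; simp
    set Y' := (Y.erase a).erase (a + 1) with hY'
    have hY'sub : Y' ⊆ Y := fun z hz => mem_of_mem_erase (mem_of_mem_erase hz)
    have hY'mem : ∀ z, z ∈ Y' ↔ z ∈ Y ∧ z ≠ a ∧ z ≠ a + 1 := by
      intro z
      simp only [hY', Finset.mem_erase]
      tauto
    have hY'ge : ∀ z ∈ Y', a + 2 ≤ z := by
      intro z hz
      rw [hY'mem] at hz
      have := hmin z hz.1
      omega
    have hcnt' : ∀ z ∈ Y', (Y'.filter (· ≤ z)).card + 2 = (Y.filter (· ≤ z)).card := by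
      intro z hz
      have hz2 := hY'ge z hz
      have : Y.filter (· ≤ z) = insert a (insert (a+1) (Y'.filter (· ≤ z))) := by
        ext w
        simp only [mem_filter, mem_insert, hY'mem]
        constructor
        · rintro ⟨hw, hle⟩
          by_cases h1 : w = a; · tauto
          by_cases h2 : w = a + 1; · tauto
          exact Or.inr (Or.inr ⟨⟨hw, h1, h2⟩, hle⟩)
        · rintro (rfl | rfl | ⟨⟨hw, _, _⟩, hle⟩)
          · exact ⟨haY, by omega⟩
          · exact ⟨ha1Y, by omega⟩
          · exact ⟨hw, hle⟩
      have hnm1 : (a+1) ∉ Y'.filter (· ≤ z) := by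
        simp only [mem_filter, hY'mem]; intro hc; exact hc.1.2.2 rfl
      have hnm2 : a ∉ insert (a+1) (Y'.filter (· ≤ z)) := by
        simp only [mem_insert, mem_filter, hY'mem]
        rintro (hc | hc)
        · omega
        · exact hc.1.2.1 rfl
      rw [this, Finset.card_insert_of_notMem hnm2, Finset.card_insert_of_notMem hnm1]
    have hcard' : Y'.card + 2 = n := by
      rw [hY', Finset.card_erase_of_mem, Finset.card_erase_of_mem haY, hn]
      · have : 1 ≤ Y.card := Finset.card_pos.2 hne
        have h2 : 2 ≤ Y.card := by
          have : ({a, a+1} : Finset ℤ) ⊆ Y := by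
            intro z hz; simp only [mem_insert, mem_singleton] at hz
            rcases hz with rfl | rfl <;> assumption
          have := Finset.card_le_card this
          rwa [Finset.card_insert_of_notMem (by simp), Finset.card_singleton] at this
        omega
      · exact Finset.mem_erase.2 ⟨by omega, ha1Y⟩
    have hP' : IsPaired Y' := by
      refine ih Y'.card (by omega) Y' rfl ?_
      intro y hy
      have hyY := hY'sub hy
      have hyge := hY'ge y hy
      have hcc := hcnt' y hy
      constructor
      · intro hodd
        have : Odd (Y.filter (· ≤ y)).card := by
          rcases hodd with ⟨c, hc⟩; exact ⟨c + 1, by omega⟩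
        have h1 := (h y hyY).1 this
        rw [hY'mem]
        exact ⟨h1, by omega, by omega⟩
      · intro heven
        have hevY : Even (Y.filter (· ≤ y)).card := by
          rcases heven with ⟨c, hc⟩; exact ⟨c + 1, by omega⟩
        have h1 := (h y hyY).2 hevY
        rw [hY'mem]
        refine ⟨h1, by omega, ?_⟩
        -- if y - 1 = a + 1 then y = a + 2 and count is 3, odd: contradiction
        intro hcontra
        have hy2 : y = a + 2 := by omega
        have : Y'.filter (· ≤ y) = {y} := by
          ext w
          simp only [mem_filter, mem_singleton]
          constructor
          · rintro ⟨hw, hle⟩; have := hY'ge w hw; omega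
          · rintro rfl; exact ⟨hy, le_refl _⟩
        rw [this] at heven
        simp at heven
    obtain ⟨T, hTeq, hTsep⟩ := hP'
    refine ⟨insert a T, ?_, ?_⟩
    · have hTa : ∀ t ∈ T, a + 2 ≤ t := by
        intro t ht
        exact hY'ge t (by rw [hTeq]; exact mem_union_left _ ht)
      ext z
      simp only [mem_union, mem_insert, mem_image]
      constructor
      · intro hz
        rcases eq_or_ne z a with rfl | h1; · tauto
        rcases eq_or_ne z (a+1) with rfl | h2
        · exact Or.inr ⟨a, by tauto⟩
        · have : z ∈ Y' := (hY'mem z).2 ⟨hz, h1, h2⟩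
          rw [hTeq] at this
          simp only [mem_union, mem_image] at this
          rcases this with h | ⟨t, ht, rfl⟩
          · tauto
          · exact Or.inr ⟨t, by tauto⟩
      · rintro ((rfl | hz) | ⟨t, (rfl | ht), rfl⟩)
        · exact haY
        · exact hY'sub (by rw [hTeq]; exact mem_union_left _ hz)
        · exact ha1Y
        · exact hY'sub (by rw [hTeq]; exact mem_union_right _ (mem_image_of_mem _ ht))
    · intro x hx y hy hxy
      simp only [mem_insert] at hx hy
      have habs : ∀ u v : ℤ, u + 2 ≤ v ∨ v + 2 ≤ u → 2 ≤ |u - v| := by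
        intro u v h; rcases h with h | h
        · rw [abs_sub_comm, abs_of_nonneg (by omega)]; omega
        · rw [abs_of_nonneg (by omega)]; omega
      rcases hx with rfl | hx <;> rcases hy with rfl | hy
      · omega
      · exact habs _ _ (Or.inl (hY'ge y (by rw [hTeq]; exact mem_union_left _ hy)))
      · exact habs _ _ (Or.inr (hY'ge x (by rw [hTeq]; exact mem_union_left _ hx)))
      · exact hTsep x hx y hy hxy


lemma paired_left (k : ℤ) (S : Finset ℤ) (hG : IsGale 0 k S) (u v : ℤ)
    (hu0 : 0 ≤ u) (huk : u ≤ k) (huS : u ∉ S) (hvk : v ≤ k)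
    (hE : Even ((S ∩ Finset.Ioo u v).card)) : IsPaired (S ∩ Finset.Ioo u v) := by
  set Y := S ∩ Finset.Ioo u v with hY
  have hmem : ∀ z, z ∈ Y ↔ z ∈ S ∧ u < z ∧ z < v := by
    intro z; simp [hY, mem_inter, mem_Ioo]
  apply lemmaP
  intro y hy
  have hyS : y ∈ S ∧ u < y ∧ y < v := by
    simpa [hY, mem_inter, mem_Ioo] using hy
  constructor
  · intro hodd
    by_contra hny
    rcases le_or_gt v (y + 1) with hv | hv
    · have : Y.filter (· ≤ y) = Y := by
        apply Finset.filter_true_of_mem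
        intro z hz
        have := (hmem z).1 hz
        omega
      rw [this] at hodd
      exact (Nat.not_even_iff_odd.2 hodd) hE
    · have hnyS : y + 1 ∉ S := by
        intro hc
        exact hny ((hmem (y+1)).2 ⟨hc, by omega, hv⟩)
      have hgale := hG.2 u (by simp [mem_Icc]; omega) (y+1) (by simp [mem_Icc]; omega)
        huS hnyS (by omega)
      have hid : S ∩ Finset.Ioo u (y+1) = Y.filter (· ≤ y) := by
        ext z
        simp only [mem_inter, mem_Ioo, mem_filter, hY]
        constructor
        · rintro ⟨hz, h1, h2⟩; exact ⟨⟨hz, h1, by omega⟩, by omega⟩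
        · rintro ⟨⟨hz, h1, h2⟩, h3⟩; exact ⟨hz, h1, by omega⟩
      rw [hid] at hgale
      exact (Nat.not_even_iff_odd.2 hodd) hgale
  · intro heven
    by_contra hny
    rcases le_or_gt (y - 1) u with hu | hu
    · have : Y.filter (· ≤ y) = {y} := by
        ext z
        simp only [mem_filter, mem_singleton, hY, mem_inter, mem_Ioo]
        constructor
        · rintro ⟨⟨_, h1, _⟩, h3⟩; omega
        · rintro rfl; exact ⟨(hmem _).1 hy, le_refl _⟩
      rw [this] at heven
      simp at heven
    · have hnyS : y - 1 ∉ S := by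
        intro hc
        exact hny ((hmem (y-1)).2 ⟨hc, hu, by omega⟩)
      have hgale := hG.2 u (by simp [mem_Icc]; omega) (y-1) (by simp [mem_Icc]; omega)
        huS hnyS (by omega)
      have hid : Y.filter (· ≤ y) = insert y (S ∩ Finset.Ioo u (y-1)) := by
        ext z
        simp only [mem_filter, mem_insert, mem_inter, mem_Ioo, hY]
        constructor
        · rintro ⟨⟨hz, h1, h2⟩, h3⟩
          rcases eq_or_ne z y with rfl | hne
          · exact Or.inl rfl
          · refine Or.inr ⟨hz, h1, ?_⟩
            have : z ≠ y - 1 := fun hc => hnyS (hc ▸ hz)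
            omega
        · rintro (rfl | ⟨hz, h1, h2⟩)
          · exact ⟨⟨hyS.1, hyS.2.1, hyS.2.2⟩, le_refl _⟩
          · refine ⟨⟨hz, h1, ?_⟩, ?_⟩ <;> omega
      have hnm : y ∉ S ∩ Finset.Ioo u (y-1) := by simp [mem_inter, mem_Ioo]
      rw [hid, Finset.card_insert_of_notMem hnm] at heven
      rcases hgale with ⟨c, hc⟩
      rcases heven with ⟨c', hc'⟩
      omega

lemma paired_right (k : ℤ) (S : Finset ℤ) (hG : IsGale 0 k S) (u v : ℤ)
    (hu0 : 0 ≤ u) (hv0 : 0 ≤ v) (hvk : v ≤ k) (hvS : v ∉ S)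
    (hE : Even ((S ∩ Finset.Ioo u v).card)) : IsPaired (S ∩ Finset.Ioo u v) := by
  set Y := S ∩ Finset.Ioo u v with hY
  have hmem : ∀ z, z ∈ Y ↔ z ∈ S ∧ u < z ∧ z < v := by
    intro z; simp [hY, mem_inter, mem_Ioo]
  have hsplit : ∀ y, (Y.filter (· ≤ y)).card + (Y.filter (fun z => y < z)).card = Y.card := by
    intro y
    have h1 := Finset.card_filter_add_card_filter_not (s := Y) (p := (· ≤ y))
    have h2 : Y.filter (fun a => ¬ a ≤ y) = Y.filter (fun z => y < z) :=
      Finset.filter_congr (fun z _ => by constructor <;> intro <;> omega)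
    rw [h2] at h1
    exact h1
  apply lemmaP
  intro y hy
  have hyS : y ∈ S ∧ u < y ∧ y < v := (hmem y).1 hy
  constructor
  · intro hodd
    by_contra hny
    have hoddR : Odd ((Y.filter (fun z => y < z)).card) := by
      have := hsplit y
      rcases hE with ⟨c, hc⟩; rcases hodd with ⟨c', hc'⟩
      refine ⟨c - c' - 1, by omega⟩
    rcases le_or_gt v (y + 1) with hv | hv
    · have : Y.filter (fun z => y < z) = ∅ := by
        apply Finset.filter_false_of_mem
        intro z hz
        have := (hmem z).1 hz
        omega
      rw [this] at hoddR
      simp at hoddR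
    · have hnyS : y + 1 ∉ S := by
        intro hc
        exact hny ((hmem (y+1)).2 ⟨hc, by omega, hv⟩)
      have hgale := hG.2 (y+1) (by simp [mem_Icc]; omega) v (by simp [mem_Icc]; omega)
        hnyS hvS (by omega)
      have hid : S ∩ Finset.Ioo (y+1) v = Y.filter (fun z => y < z) := by
        ext z
        simp only [mem_inter, mem_Ioo, mem_filter, hY]
        constructor
        · rintro ⟨hz, h1, h2⟩; exact ⟨⟨hz, by omega, h2⟩, by omega⟩
        · rintro ⟨⟨hz, h1, h2⟩, h3⟩
          have : z ≠ y + 1 := fun hc => hnyS (hc ▸ hz)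
          exact ⟨hz, by omega, h2⟩
      rw [hid] at hgale
      exact (Nat.not_even_iff_odd.2 hoddR) hgale
  · intro heven
    by_contra hny
    rcases le_or_gt (y - 1) u with hu | hu
    · have : Y.filter (· ≤ y) = {y} := by
        ext z
        simp only [mem_filter, mem_singleton, hY, mem_inter, mem_Ioo]
        constructor
        · rintro ⟨⟨_, h1, _⟩, h3⟩; omega
        · rintro rfl; exact ⟨(hmem _).1 hy, le_refl _⟩
      rw [this] at heven
      simp at heven
    · have hnyS : y - 1 ∉ S := by
        intro hc
        exact hny ((hmem (y-1)).2 ⟨hc, hu, by omega⟩)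
      have hgale := hG.2 (y-1) (by simp [mem_Icc]; omega) v (by simp [mem_Icc]; omega)
        hnyS hvS (by omega)
      have hid : S ∩ Finset.Ioo (y-1) v = insert y (Y.filter (fun z => y < z)) := by
        ext z
        simp only [mem_inter, mem_Ioo, mem_insert, mem_filter, hY]
        constructor
        · rintro ⟨hz, h1, h2⟩
          rcases eq_or_ne z y with rfl | hne
          · exact Or.inl rfl
          · have : z ≠ y - 1 := fun hc => hnyS (hc ▸ hz)
            exact Or.inr ⟨⟨hz, by omega, h2⟩, by omega⟩
        · rintro (rfl | ⟨⟨hz, h1, h2⟩, h3⟩)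
          · exact ⟨hyS.1, by omega, hyS.2.2⟩
          · exact ⟨hz, by omega, h2⟩
      have hnm : y ∉ Y.filter (fun z => y < z) := by simp [mem_filter]
      rw [hid, Finset.card_insert_of_notMem hnm] at hgale
      have hevR : Even ((Y.filter (fun z => y < z)).card) := by
        have := hsplit y
        rcases hE with ⟨c, hc⟩; rcases heven with ⟨c', hc'⟩
        refine ⟨c - c', by omega⟩
      rcases hgale with ⟨c, hc⟩
      rcases hevR with ⟨c', hc'⟩
      omega


lemma zfacts (kk i r za zb zc zd : ℤ) (hr : 1 ≤ r) (h2r : 2*r - 1 < kk)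
    (hza : za = max 0 (min kk i)) (hzb : zb = max 0 (min kk (i + 2*r - 1)))
    (hzc : zc = max 0 (min kk (i + kk))) (hzd : zd = max 0 (min kk (i + kk + 2*r - 1))) :
    za ≤ zb ∧ zb ≤ zc ∧ zc ≤ zd ∧ 0 ≤ za ∧ zd ≤ kk ∧
    (zb + 1 - za) + (zd + 1 - zc) ≤ 2*r + 1 ∧
    ((1 ≤ za ∧ zb < zc) → zb + 1 - za = 2*r) ∧
    ((zb < zc ∧ zd < kk) → zd + 1 - zc = 2*r) := by
  refine ⟨by omega, by omega, by omega, by omega, by omega, by omega, by omega, by omega⟩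


set_option maxHeartbeats 1000000 in
lemma fwd (m k : ℕ) (hm : 1 ≤ m) (hk : 2 * m + 1 ≤ k) (X : Finset ℤ)
    (hX : MemX m k k X) :
    (retr k X).card = 2 * m + 1 ∧ IsGale 0 k (retr k X) := by
  obtain ⟨i, r, Y, hr1, hrm, hP, hYc, hYsub, hXeq, hcard⟩ := hX
  have hkz : (2*m+1 : ℤ) ≤ (k:ℤ) := by exact_mod_cast hk
  have hmz : (1:ℤ) ≤ (m:ℤ) := by exact_mod_cast hm
  have hrz1 : (1:ℤ) ≤ (r:ℤ) := by exact_mod_cast hr1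
  have hrzm : (r:ℤ) ≤ (m:ℤ) := by exact_mod_cast hrm
  obtain ⟨za, zb, zc, zd, hza, hzb, hzc, hzd⟩ :
      ∃ za zb zc zd : ℤ, za = max 0 (min (k:ℤ) i) ∧
        zb = max 0 (min (k:ℤ) (i + 2*(r:ℤ) - 1)) ∧
        zc = max 0 (min (k:ℤ) (i + (k:ℤ))) ∧
        zd = max 0 (min (k:ℤ) (i + (k:ℤ) + 2*(r:ℤ) - 1)) :=
    ⟨_, _, _, _, rfl, rfl, rfl, rfl⟩
  obtain ⟨hf1, hf2, hf3, hf4, hf5, hf6, hf7, hf8⟩ :=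
    zfacts (k:ℤ) i (r:ℤ) za zb zc zd hrz1 (by omega) hza hzb hzc hzd
  have hFX : retr k X = (Finset.Icc za zb ∪ Finset.Icc zc zd) ∪ retr (k:ℤ) Y := by
    rw [hXeq, retr_union, retr_union, retr_Icc _ _ _ (by omega), retr_Icc _ _ _ (by omega),
      ← hza, ← hzb, ← hzc, ← hzd]
    ext z
    simp only [mem_union]
    tauto
  clear hza hzb hzc hzd hXeq
  have hcA : (Finset.Icc za zb).card = (zb + 1 - za).toNat := Int.card_Icc _ _
  have hcB : (Finset.Icc zc zd).card = (zd + 1 - zc).toNat := Int.card_Icc _ _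
  have hABle : (Finset.Icc za zb).card + (Finset.Icc zc zd).card ≤ 2 * r + 1 := by
    rw [hcA, hcB]; omega
  have h1 : (Finset.Icc za zb ∪ Finset.Icc zc zd).card
      ≤ (Finset.Icc za zb).card + (Finset.Icc zc zd).card := Finset.card_union_le _ _
  have h2 : (retr (k:ℤ) Y).card ≤ Y.card := Finset.card_image_le
  have h3 : (retr k X).card ≤ (Finset.Icc za zb ∪ Finset.Icc zc zd).card
      + (retr (k:ℤ) Y).card := by
    rw [hFX]; exact Finset.card_union_le _ _
  have e3 : (retr k X).card = 2 * m + 1 := by omega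
  have e1 : (Finset.Icc za zb ∪ Finset.Icc zc zd).card
      = (Finset.Icc za zb).card + (Finset.Icc zc zd).card := by omega
  have e2 : (retr (k:ℤ) Y).card = Y.card := by omega
  have hABcard : (Finset.Icc za zb).card + (Finset.Icc zc zd).card = 2 * r + 1 := by omega
  have hDisjAB : Disjoint (Finset.Icc za zb) (Finset.Icc zc zd) :=
    Finset.card_union_eq_card_add_card.mp e1
  have hInj : Set.InjOn (fun x => max 0 (min (k:ℤ) x)) Y := Finset.card_image_iff.mp e2
  have hYbounds : ∀ y ∈ Y, 0 ≤ y ∧ y ≤ (k:ℤ) := by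
    obtain ⟨T, hTeq, hTsep⟩ := hP
    have key : ∀ s ∈ T, 0 ≤ s ∧ s + 1 ≤ (k:ℤ) := by
      intro s hs
      have h1 : s ∈ Y := by rw [hTeq]; exact mem_union_left _ hs
      have h2 : s + 1 ∈ Y := by rw [hTeq]; exact mem_union_right _ (mem_image_of_mem _ hs)
      by_contra hcon
      have heq : (fun x => max 0 (min (k:ℤ) x)) s = (fun x => max 0 (min (k:ℤ) x)) (s+1) := by
        simp only; omega
      have := hInj (Finset.mem_coe.2 h1) (Finset.mem_coe.2 h2) heq
      omega
    intro y hy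
    rw [hTeq] at hy
    rcases Finset.mem_union.1 hy with hy | hy
    · have := key y hy; omega
    · obtain ⟨s, hs, rfl⟩ := Finset.mem_image.1 hy
      have := key s hs; omega
  have hretrY : retr (k:ℤ) Y = Y := retr_eq_self _ _ hYbounds
  have e4 : ((Finset.Icc za zb ∪ Finset.Icc zc zd) ∪ Y).card
      = (Finset.Icc za zb ∪ Finset.Icc zc zd).card + Y.card := by
    rw [← hretrY, ← hFX]; omega
  have hDisjABY : Disjoint (Finset.Icc za zb ∪ Finset.Icc zc zd) Y :=
    Finset.card_union_eq_card_add_card.mp e4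
  have hzbzc : zb < zc := by
    by_contra hcon
    have hmem1 : zc ∈ Finset.Icc za zb := by rw [mem_Icc]; omega
    have hmem2 : zc ∈ Finset.Icc zc zd := by rw [mem_Icc]; omega
    exact Finset.disjoint_left.mp hDisjAB hmem1 hmem2
  -- key parity fact
  have key : ∀ t : ℤ, 0 ≤ t → t ≤ (k:ℤ) → t ∉ retr k X →
      ((retr k X ∩ Finset.Icc 0 t).card) % 2 = (Finset.Icc za zb).card % 2 := by
    intro t ht0 htk htF
    have htA : t ∉ Finset.Icc za zb :=
      fun h => htF (by rw [hFX]; exact mem_union_left _ (mem_union_left _ h))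
    have htB : t ∉ Finset.Icc zc zd :=
      fun h => htF (by rw [hFX]; exact mem_union_left _ (mem_union_right _ h))
    have htY : t ∉ Y := fun h => htF (by rw [hFX, hretrY]; exact mem_union_right _ h)
    have htA' : t < za ∨ zb < t := by rw [mem_Icc] at htA; omega
    have htB' : t < zc ∨ zd < t := by rw [mem_Icc] at htB; omega
    have hsplitF : retr k X ∩ Finset.Icc 0 t =
        ((Finset.Icc za zb ∩ Finset.Icc 0 t) ∪ (Finset.Icc zc zd ∩ Finset.Icc 0 t))
          ∪ (Y ∩ Finset.Icc 0 t) := by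
      rw [hFX, hretrY]
      ext z
      simp only [mem_inter, mem_union]
      constructor
      · rintro ⟨(h | h) | h, h2⟩
        · exact Or.inl (Or.inl ⟨h, h2⟩)
        · exact Or.inl (Or.inr ⟨h, h2⟩)
        · exact Or.inr ⟨h, h2⟩
      · rintro ((⟨h, h2⟩ | ⟨h, h2⟩) | ⟨h, h2⟩) <;> exact ⟨by tauto, h2⟩
    have hD1 : Disjoint (Finset.Icc za zb ∩ Finset.Icc 0 t)
        (Finset.Icc zc zd ∩ Finset.Icc 0 t) :=
      hDisjAB.mono Finset.inter_subset_left Finset.inter_subset_left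
    have hD2 : Disjoint
        ((Finset.Icc za zb ∩ Finset.Icc 0 t) ∪ (Finset.Icc zc zd ∩ Finset.Icc 0 t))
        (Y ∩ Finset.Icc 0 t) :=
      hDisjABY.mono
        (Finset.union_subset_union Finset.inter_subset_left Finset.inter_subset_left)
        Finset.inter_subset_left
    have hctotal : (retr k X ∩ Finset.Icc 0 t).card =
        (Finset.Icc za zb ∩ Finset.Icc 0 t).card + (Finset.Icc zc zd ∩ Finset.Icc 0 t).card
          + (Y ∩ Finset.Icc 0 t).card := by
      rw [hsplitF, card_union_of_disjoint hD2, card_union_of_disjoint hD1]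
    have hYI : (Y ∩ Finset.Icc 0 t).card % 2 = 0 :=
      even_card_inter Y hP (fun y hy => (hYbounds y hy).1) t htY
    rcases htA' with hlt | hgt
    · have hAe : Finset.Icc za zb ∩ Finset.Icc 0 t = ∅ := by
        ext z; simp only [mem_inter, mem_Icc, Finset.notMem_empty, iff_false]; omega
      have hBe : Finset.Icc zc zd ∩ Finset.Icc 0 t = ∅ := by
        ext z; simp only [mem_inter, mem_Icc, Finset.notMem_empty, iff_false]; omega
      rw [hctotal, hAe, hBe]
      simp only [Finset.card_empty]
      rw [hcA]
      omega
    · rcases htB' with hlt2 | hgt2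
      · have hAe : Finset.Icc za zb ∩ Finset.Icc 0 t = Finset.Icc za zb := by
          ext z; simp only [mem_inter, mem_Icc]; omega
        have hBe : Finset.Icc zc zd ∩ Finset.Icc 0 t = ∅ := by
          ext z; simp only [mem_inter, mem_Icc, Finset.notMem_empty, iff_false]; omega
        rw [hctotal, hAe, hBe]
        simp only [Finset.card_empty]
        omega
      · have hAe : Finset.Icc za zb ∩ Finset.Icc 0 t = Finset.Icc za zb := by
          ext z; simp only [mem_inter, mem_Icc]; omega
        have hBe : Finset.Icc zc zd ∩ Finset.Icc 0 t = Finset.Icc zc zd := by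
          ext z; simp only [mem_inter, mem_Icc]; omega
        rw [hctotal, hAe, hBe, hcA, hcB]
        omega
  refine ⟨e3, ?_, ?_⟩
  · intro z hz
    simp only [retr, mem_image] at hz
    obtain ⟨w, _, rfl⟩ := hz
    simp only [mem_Icc]
    omega
  · intro x hx y hy hxS hyS hxy
    rw [mem_Icc] at hx hy
    have h1 := key x hx.1 hx.2 hxS
    have h2 := key y hy.1 hy.2 hyS
    have hdecomp : retr k X ∩ Finset.Icc 0 y =
        (retr k X ∩ Finset.Icc 0 x) ∪ (retr k X ∩ Finset.Ioo x y) := by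
      ext z
      simp only [mem_inter, mem_Icc, mem_union, mem_Ioo]
      constructor
      · rintro ⟨hzF, hz0, hzy⟩
        rcases le_or_gt z x with h | h
        · exact Or.inl ⟨hzF, hz0, h⟩
        · refine Or.inr ⟨hzF, h, ?_⟩
          rcases eq_or_ne z y with rfl | hne
          · exact absurd hzF hyS
          · omega
      · rintro (⟨hzF, hz0, hzx⟩ | ⟨hzF, hzx, hzy⟩)
        · exact ⟨hzF, hz0, by omega⟩
        · exact ⟨hzF, by omega, by omega⟩
    have hdisj : Disjoint (retr k X ∩ Finset.Icc 0 x) (retr k X ∩ Finset.Ioo x y) := by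
      rw [Finset.disjoint_left]
      intro z hz1 hz2
      simp only [mem_inter, mem_Icc, mem_Ioo] at hz1 hz2
      omega
    have hceq : (retr k X ∩ Finset.Icc 0 y).card =
        (retr k X ∩ Finset.Icc 0 x).card + (retr k X ∩ Finset.Ioo x y).card := by
      rw [hdecomp, card_union_of_disjoint hdisj]
    rw [Nat.even_iff]
    omega


set_option maxHeartbeats 1600000 in
lemma bwd (m k : ℕ) (hm : 1 ≤ m) (hk : 2 * m + 1 ≤ k) (S : Finset ℤ)
    (hcard : S.card = 2 * m + 1) (hG : IsGale 0 k S) :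
    ∃ X : Finset ℤ, MemX m k k X ∧ S = retr k X := by
  have hkz : (2*m+1 : ℤ) ≤ (k:ℤ) := by exact_mod_cast hk
  have hmz : (1:ℤ) ≤ (m:ℤ) := by exact_mod_cast hm
  have hS0 : ∀ z ∈ S, 0 ≤ z ∧ z ≤ (k:ℤ) := by
    intro z hz
    have := hG.1 hz
    rwa [mem_Icc] at this
  -- first nonelement from the left
  have hexp : ∃ n : ℕ, ((n:ℤ)) ∉ S := by
    refine ⟨k+1, fun hc => ?_⟩
    have := hS0 _ hc
    push_cast at this
    omega
  set p := Nat.find hexp with hpdef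
  have hp1 : ((p:ℕ):ℤ) ∉ S := Nat.find_spec hexp
  have hp2 : ∀ z : ℤ, 0 ≤ z → z < (p:ℤ) → z ∈ S := by
    intro z h0 hz
    have h := Nat.find_min hexp (m := z.toNat) (by omega)
    rw [not_not] at h
    rwa [Int.toNat_of_nonneg h0] at h
  -- first nonelement from the right
  have hexq : ∃ n : ℕ, ((k:ℤ) - n) ∉ S := by
    refine ⟨k+1, fun hc => ?_⟩
    have := hS0 _ hc
    push_cast at this
    omega
  set q := Nat.find hexq with hqdef
  have hq1 : (k:ℤ) - (q:ℤ) ∉ S := Nat.find_spec hexq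
  have hq2 : ∀ z : ℤ, (k:ℤ) - (q:ℤ) < z → z ≤ (k:ℤ) → z ∈ S := by
    intro z hz hzk
    have h := Nat.find_min hexq (m := ((k:ℤ) - z).toNat) (by omega)
    rw [not_not] at h
    rwa [show ((k:ℤ) - (((k:ℤ) - z).toNat : ℤ)) = z by omega] at h
  have hpk : (p:ℤ) ≤ 2*m+1 := by
    have hsub : Finset.Icc (0:ℤ) ((p:ℤ)-1) ⊆ S := by
      intro z hz
      rw [mem_Icc] at hz
      exact hp2 z hz.1 (by omega)
    have := Finset.card_le_card hsub
    rw [Int.card_Icc] at this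
    omega
  have hqk : (q:ℤ) ≤ 2*m+1 := by
    have hsub : Finset.Icc ((k:ℤ)-(q:ℤ)+1) (k:ℤ) ⊆ S := by
      intro z hz
      rw [mem_Icc] at hz
      exact hq2 z (by omega) hz.2
    have := Finset.card_le_card hsub
    rw [Int.card_Icc] at this
    omega
  have hplek : (p:ℤ) ≤ (k:ℤ) - (q:ℤ) := by
    by_contra hcon
    exact hp1 (hq2 (p:ℤ) (by omega) (by omega))
  set Y0 := S ∩ Finset.Ioo ((p:ℤ)) ((k:ℤ) - (q:ℤ)) with hY0
  have hY0mem : ∀ z, z ∈ Y0 ↔ z ∈ S ∧ (p:ℤ) < z ∧ z < (k:ℤ) - (q:ℤ) := by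
    intro z; rw [hY0, mem_inter, mem_Ioo]
  have hY0S : ∀ z ∈ Y0, z ∈ S := fun z hz => ((hY0mem z).1 hz).1
  have hdecomp : S = (Finset.Icc (0:ℤ) ((p:ℤ)-1) ∪ Y0) ∪ Finset.Icc ((k:ℤ)-(q:ℤ)+1) (k:ℤ) := by
    ext z
    simp only [mem_union, mem_Icc]
    constructor
    · intro hz
      have hb := hS0 z hz
      rcases le_or_gt z ((p:ℤ)-1) with h | h
      · exact Or.inl (Or.inl ⟨hb.1, h⟩)
      · rcases le_or_gt ((k:ℤ)-(q:ℤ)+1) z with h2 | h2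
        · exact Or.inr ⟨h2, hb.2⟩
        · have hzp : z ≠ (p:ℤ) := fun hc => hp1 (hc ▸ hz)
          have hzq : z ≠ (k:ℤ)-(q:ℤ) := fun hc => hq1 (hc ▸ hz)
          exact Or.inl (Or.inr ((hY0mem z).2 ⟨hz, by omega, by omega⟩))
    · rintro ((h | h) | h)
      · exact hp2 z h.1 (by omega)
      · exact hY0S z h
      · exact hq2 z (by omega) h.2
  have hdj1 : Disjoint (Finset.Icc (0:ℤ) ((p:ℤ)-1)) Y0 := by
    rw [Finset.disjoint_left]
    intro z hz1 hz2
    rw [mem_Icc] at hz1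
    have := (hY0mem z).1 hz2
    omega
  have hdj2 : Disjoint (Finset.Icc (0:ℤ) ((p:ℤ)-1) ∪ Y0) (Finset.Icc ((k:ℤ)-(q:ℤ)+1) (k:ℤ)) := by
    rw [Finset.disjoint_left]
    intro z hz1 hz2
    rw [mem_Icc] at hz2
    rcases Finset.mem_union.1 hz1 with h | h
    · rw [mem_Icc] at h; omega
    · have := (hY0mem z).1 h; omega
  have hScard : 2*m+1 = p + Y0.card + q := by
    have h1 : S.card = (Finset.Icc (0:ℤ) ((p:ℤ)-1)).card + Y0.card
        + (Finset.Icc ((k:ℤ)-(q:ℤ)+1) (k:ℤ)).card := by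
      rw [hdecomp, card_union_of_disjoint hdj2, card_union_of_disjoint hdj1]
    rw [hcard, Int.card_Icc, Int.card_Icc] at h1
    omega
  have hEY0 : Even Y0.card := by
    rcases lt_or_eq_of_le hplek with hlt | heq
    · have := hG.2 (p:ℤ) (by rw [mem_Icc]; omega) ((k:ℤ)-(q:ℤ)) (by rw [mem_Icc]; omega)
        hp1 hq1 hlt
      rwa [← hY0] at this
    · have : Y0 = ∅ := by
        ext z
        simp only [Finset.notMem_empty, iff_false]
        intro hz
        have := (hY0mem z).1 hz
        omega
      rw [this]
      simp
  have hodd : (p + q) % 2 = 1 := by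
    rcases hEY0 with ⟨c, hc⟩
    omega
  rcases Nat.eq_zero_or_pos p with hp0 | hppos
  · rcases Nat.eq_zero_or_pos q with hq0 | hqpos
    · exfalso; omega
    · -- Case B : 0 ∉ S, k ∈ S
      have hq1pos : 1 ≤ q := by omega
      have h0S : (0:ℤ) ∉ S := by
        have : ((0:ℕ):ℤ) ∉ S := by rw [← hp0]; exact hp1
        simpa using this
      have hkS : (k:ℤ) ∈ S := hq2 (k:ℤ) (by omega) le_rfl
      have hne : S.Nonempty := ⟨(k:ℤ), hkS⟩
      set a := S.min' hne with ha
      have haS : a ∈ S := S.min'_mem hne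
      have hamin : ∀ z ∈ S, a ≤ z := fun z hz => S.min'_le z hz
      have haB := hS0 a haS
      have ha1 : 1 ≤ a := by
        rcases eq_or_lt_of_le haB.1 with h | h
        · exact absurd (h ▸ haS) h0S
        · omega
      have hexl : ∃ n : ℕ, a + (n:ℤ) ∉ S := by
        refine ⟨((k:ℤ)+1-a).toNat, fun hc => ?_⟩
        rw [Int.toNat_of_nonneg (by omega)] at hc
        have := hS0 _ hc
        omega
      set l := Nat.find hexl with hldef
      have hl1 : a + (l:ℤ) ∉ S := Nat.find_spec hexl
      have hl2 : ∀ z : ℤ, a ≤ z → z < a + (l:ℤ) → z ∈ S := by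
        intro z hz1 hz2
        have h := Nat.find_min hexl (m := (z - a).toNat) (by omega)
        rw [not_not] at h
        rwa [show a + ((z - a).toNat : ℤ) = z by omega] at h
      have hl0 : 0 < l := by
        rcases Nat.eq_zero_or_pos l with h | h
        · exfalso
          apply hl1
          rw [h]
          simpa using haS
        · exact h
      have halk : a + (l:ℤ) ≤ (k:ℤ) + 1 := by
        have : a + (l:ℤ) - 1 ∈ S := hl2 _ (by omega) (by omega)
        have := hS0 _ this
        omega
      rcases le_or_gt (a + (l:ℤ)) (k:ℤ) with halk2 | halk2
      · -- Subcase B1 : the first run stops before k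
        have ha1' : a - 1 ∉ S := fun hc => by have := hamin _ hc; omega
        have hEv := hG.2 (a-1) (by rw [mem_Icc]; omega) (a + (l:ℤ)) (by rw [mem_Icc]; omega)
          ha1' hl1 (by omega)
        have hrun : S ∩ Finset.Ioo (a-1) (a + (l:ℤ)) = Finset.Icc a (a + (l:ℤ) - 1) := by
          ext z
          simp only [mem_inter, mem_Ioo, mem_Icc]
          constructor
          · rintro ⟨hz, h1, h2⟩
            have := hamin z hz
            omega
          · rintro ⟨h1, h2⟩
            exact ⟨hl2 z h1 (by omega), by omega, by omega⟩
        rw [hrun, Int.card_Icc] at hEv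
        rcases hEv with ⟨c, hc⟩
        obtain ⟨r, hr⟩ : ∃ r : ℕ, 2*r = l := ⟨l/2, by omega⟩
        have hrz : 2*(r:ℤ) = (l:ℤ) := by exact_mod_cast hr
        set i : ℤ := a with hi
        set Y : Finset ℤ := S ∩ Finset.Ioo (a + (l:ℤ)) (k:ℤ) with hY
        have hYmem : ∀ z, z ∈ Y ↔ z ∈ S ∧ a + (l:ℤ) < z ∧ z < (k:ℤ) := by
          intro z; rw [hY, mem_inter, mem_Ioo]
        have hYb : ∀ y ∈ Y, 0 ≤ y ∧ y ≤ (k:ℤ) := fun y hy => hS0 y ((hYmem y).1 hy).1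
        have hdecompB : S = (Finset.Icc a (a + (l:ℤ) - 1) ∪ Y)
            ∪ Finset.Icc (k:ℤ) (k:ℤ) := by
          ext z
          simp only [mem_union, mem_Icc]
          constructor
          · intro hz
            have hb := hS0 z hz
            have hba := hamin z hz
            rcases le_or_gt z (a + (l:ℤ) - 1) with h | h
            · exact Or.inl (Or.inl ⟨by omega, h⟩)
            · rcases eq_or_lt_of_le hb.2 with h2 | h2
              · exact Or.inr ⟨by omega, by omega⟩
              · have hzl : z ≠ a + (l:ℤ) := fun hc => hl1 (hc ▸ hz)
                exact Or.inl (Or.inr ((hYmem z).2 ⟨hz, by omega, h2⟩))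
          · rintro ((h | h) | h)
            · exact hl2 z h.1 (by omega)
            · exact ((hYmem z).1 h).1
            · rw [show z = (k:ℤ) by omega]; exact hkS
        have hdjB1 : Disjoint (Finset.Icc a (a + (l:ℤ) - 1)) Y := by
          rw [Finset.disjoint_left]
          intro z hz1 hz2
          rw [mem_Icc] at hz1
          have := (hYmem z).1 hz2
          omega
        have hdjB2 : Disjoint (Finset.Icc a (a + (l:ℤ) - 1) ∪ Y)
            (Finset.Icc (k:ℤ) (k:ℤ)) := by
          rw [Finset.disjoint_left]
          intro z hz1 hz2
          rw [mem_Icc] at hz2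
          rcases Finset.mem_union.1 hz1 with h | h
          · rw [mem_Icc] at h; omega
          · have := (hYmem z).1 h; omega
        have hScardB : 2*m+1 = l + Y.card + 1 := by
          have h1 : S.card = (Finset.Icc a (a + (l:ℤ) - 1)).card + Y.card
              + (Finset.Icc (k:ℤ) (k:ℤ)).card := by
            rw [hdecompB, card_union_of_disjoint hdjB2, card_union_of_disjoint hdjB1]
          rw [hcard, Int.card_Icc, Int.card_Icc] at h1
          omega
        have hretrX : retr k (Finset.Icc i (i + 2*(r:ℤ) - 1) ∪ Y
            ∪ Finset.Icc (i + (k:ℤ)) (i + (k:ℤ) + 2*(r:ℤ) - 1)) = S := by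
          rw [retr_union, retr_union, retr_Icc _ _ _ (by omega), retr_Icc _ _ _ (by omega),
            retr_eq_self _ _ hYb]
          have c1 : max 0 (min (k:ℤ) i) = a := by omega
          have c2 : max 0 (min (k:ℤ) (i + 2*(r:ℤ) - 1)) = a + (l:ℤ) - 1 := by omega
          have c3 : max 0 (min (k:ℤ) (i + (k:ℤ))) = (k:ℤ) := by omega
          have c4 : max 0 (min (k:ℤ) (i + (k:ℤ) + 2*(r:ℤ) - 1)) = (k:ℤ) := by omega
          rw [c1, c2, c3, c4]
          exact hdecompB.symm
        refine ⟨_, ⟨i, r, Y, by omega, by omega, ?_, by omega, ?_, rfl, ?_⟩, hretrX.symm⟩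
        · have := paired_left (k:ℤ) S hG (a + (l:ℤ)) (k:ℤ) (by omega) (by omega) hl1
            le_rfl (by rw [← hY]; refine Nat.even_iff.mpr (by omega))
          rwa [← hY] at this
        · intro z hz
          have := (hYmem z).1 hz
          rw [mem_Icc]
          omega
        · rw [hretrX, hcard]
      · -- Subcase B2 : S = Icc a k
        have halk3 : a + (l:ℤ) = (k:ℤ) + 1 := by omega
        have hSfull : S = Finset.Icc a (k:ℤ) := by
          ext z
          rw [mem_Icc]
          constructor
          · intro hz; exact ⟨hamin z hz, (hS0 z hz).2⟩
          · intro hz; exact hl2 z hz.1 (by omega)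
        have hacard : a = (k:ℤ) - 2*m := by
          have : S.card = ((k:ℤ) + 1 - a).toNat := by rw [hSfull, Int.card_Icc]
          rw [hcard] at this
          omega
        have hretrX : retr k (Finset.Icc a (a + 2*((m:ℕ):ℤ) - 1) ∪ (∅ : Finset ℤ)
            ∪ Finset.Icc (a + (k:ℤ)) (a + (k:ℤ) + 2*((m:ℕ):ℤ) - 1)) = S := by
          rw [retr_union, retr_union, retr_Icc _ _ _ (by omega), retr_Icc _ _ _ (by omega)]
          have hre : retr (k:ℤ) (∅ : Finset ℤ) = ∅ := by
            rw [retr, Finset.image_empty]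
          rw [hre]
          have c1 : max 0 (min (k:ℤ) a) = a := by omega
          have c2 : max 0 (min (k:ℤ) (a + 2*((m:ℕ):ℤ) - 1)) = (k:ℤ) - 1 := by omega
          have c3 : max 0 (min (k:ℤ) (a + (k:ℤ))) = (k:ℤ) := by omega
          have c4 : max 0 (min (k:ℤ) (a + (k:ℤ) + 2*((m:ℕ):ℤ) - 1)) = (k:ℤ) := by omega
          rw [c1, c2, c3, c4, hSfull]
          ext z
          simp [mem_union, mem_Icc]
          omega
        refine ⟨_, ⟨a, m, ∅, hm, le_rfl, ⟨∅, by simp, by simp⟩, by simp, ?_, rfl, ?_⟩,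
          hretrX.symm⟩
        · exact Finset.empty_subset _
        · rw [hretrX, hcard]
  · rcases Nat.eq_zero_or_pos q with hq0 | hqpos
    · -- Case C : 0 ∈ S, k ∉ S
      have hkS : (k:ℤ) ∉ S := by
        have : (k:ℤ) - ((0:ℕ):ℤ) ∉ S := by rw [← hq0]; exact hq1
        simpa using this
      have h0S : (0:ℤ) ∈ S := hp2 0 le_rfl (by exact_mod_cast hppos)
      have hne : S.Nonempty := ⟨0, h0S⟩
      set b := S.max' hne with hb
      have hbS : b ∈ S := S.max'_mem hne
      have hbmax : ∀ z ∈ S, z ≤ b := fun z hz => S.le_max' z hz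
      have hbB := hS0 b hbS
      have hbk : b ≤ (k:ℤ) - 1 := by
        rcases eq_or_lt_of_le hbB.2 with h | h
        · exact absurd (h ▸ hbS) hkS
        · omega
      have hb0 : 0 ≤ b := hbB.1
      have hexl : ∃ n : ℕ, b - (n:ℤ) ∉ S := by
        refine ⟨(b+1).toNat, fun hc => ?_⟩
        rw [Int.toNat_of_nonneg (by omega)] at hc
        have := hS0 _ hc
        omega
      set l := Nat.find hexl with hldef
      have hl1 : b - (l:ℤ) ∉ S := Nat.find_spec hexl
      have hl2 : ∀ z : ℤ, b - (l:ℤ) < z → z ≤ b → z ∈ S := by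
        intro z hz1 hz2
        have h := Nat.find_min hexl (m := (b - z).toNat) (by omega)
        rw [not_not] at h
        rwa [show b - ((b - z).toNat : ℤ) = z by omega] at h
      have hl0 : 0 < l := by
        rcases Nat.eq_zero_or_pos l with h | h
        · exfalso
          apply hl1
          rw [h]
          simpa using hbS
        · exact h
      have hblm : -1 ≤ b - (l:ℤ) := by
        have : b - (l:ℤ) + 1 ∈ S := hl2 _ (by omega) (by omega)
        have := hS0 _ this
        omega
      rcases le_or_gt 0 (b - (l:ℤ)) with hbl2 | hbl2
      · -- Subcase C1 : the last run stops after 0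
        have hb1' : b + 1 ∉ S := fun hc => by have := hbmax _ hc; omega
        have hEv := hG.2 (b - (l:ℤ)) (by rw [mem_Icc]; omega) (b+1) (by rw [mem_Icc]; omega)
          hl1 hb1' (by omega)
        have hrun : S ∩ Finset.Ioo (b - (l:ℤ)) (b+1) = Finset.Icc (b - (l:ℤ) + 1) b := by
          ext z
          simp only [mem_inter, mem_Ioo, mem_Icc]
          constructor
          · rintro ⟨hz, h1, h2⟩
            omega
          · rintro ⟨h1, h2⟩
            exact ⟨hl2 z (by omega) h2, by omega, by omega⟩
        rw [hrun, Int.card_Icc] at hEv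
        rcases hEv with ⟨c, hc⟩
        obtain ⟨r, hr⟩ : ∃ r : ℕ, 2*r = l := ⟨l/2, by omega⟩
        have hrz : 2*(r:ℤ) = (l:ℤ) := by exact_mod_cast hr
        set i : ℤ := b - (l:ℤ) + 1 - (k:ℤ) with hi
        set Y : Finset ℤ := S ∩ Finset.Ioo (0:ℤ) (b - (l:ℤ)) with hY
        have hYmem : ∀ z, z ∈ Y ↔ z ∈ S ∧ 0 < z ∧ z < b - (l:ℤ) := by
          intro z; rw [hY, mem_inter, mem_Ioo]
        have hYb : ∀ y ∈ Y, 0 ≤ y ∧ y ≤ (k:ℤ) := fun y hy => hS0 y ((hYmem y).1 hy).1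
        have hdecompC : S = (Finset.Icc (0:ℤ) 0 ∪ Y)
            ∪ Finset.Icc (b - (l:ℤ) + 1) b := by
          ext z
          simp only [mem_union, mem_Icc]
          constructor
          · intro hz
            have hzb := hS0 z hz
            have hzb2 := hbmax z hz
            rcases le_or_gt z 0 with h | h
            · exact Or.inl (Or.inl ⟨hzb.1, h⟩)
            · rcases le_or_gt z (b - (l:ℤ)) with h2 | h2
              · have hzl : z ≠ b - (l:ℤ) := fun hc => hl1 (hc ▸ hz)
                exact Or.inl (Or.inr ((hYmem z).2 ⟨hz, h, by omega⟩))
              · exact Or.inr ⟨by omega, by omega⟩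
          · rintro ((h | h) | h)
            · rw [show z = 0 by omega]; exact h0S
            · exact ((hYmem z).1 h).1
            · exact hl2 z (by omega) h.2
        have hdjC1 : Disjoint (Finset.Icc (0:ℤ) 0) Y := by
          rw [Finset.disjoint_left]
          intro z hz1 hz2
          rw [mem_Icc] at hz1
          have := (hYmem z).1 hz2
          omega
        have hdjC2 : Disjoint (Finset.Icc (0:ℤ) 0 ∪ Y)
            (Finset.Icc (b - (l:ℤ) + 1) b) := by
          rw [Finset.disjoint_left]
          intro z hz1 hz2
          rw [mem_Icc] at hz2
          rcases Finset.mem_union.1 hz1 with h | h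
          · rw [mem_Icc] at h; omega
          · have := (hYmem z).1 h; omega
        have hScardC : 2*m+1 = 1 + Y.card + l := by
          have h1 : S.card = (Finset.Icc (0:ℤ) 0).card + Y.card
              + (Finset.Icc (b - (l:ℤ) + 1) b).card := by
            rw [hdecompC, card_union_of_disjoint hdjC2, card_union_of_disjoint hdjC1]
          rw [hcard, Int.card_Icc, Int.card_Icc] at h1
          omega
        have hretrX : retr k (Finset.Icc i (i + 2*(r:ℤ) - 1) ∪ Y
            ∪ Finset.Icc (i + (k:ℤ)) (i + (k:ℤ) + 2*(r:ℤ) - 1)) = S := by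
          rw [retr_union, retr_union, retr_Icc _ _ _ (by omega), retr_Icc _ _ _ (by omega),
            retr_eq_self _ _ hYb]
          have c1 : max 0 (min (k:ℤ) i) = 0 := by omega
          have c2 : max 0 (min (k:ℤ) (i + 2*(r:ℤ) - 1)) = 0 := by omega
          have c3 : max 0 (min (k:ℤ) (i + (k:ℤ))) = b - (l:ℤ) + 1 := by omega
          have c4 : max 0 (min (k:ℤ) (i + (k:ℤ) + 2*(r:ℤ) - 1)) = b := by omega
          rw [c1, c2, c3, c4]
          exact hdecompC.symm
        refine ⟨_, ⟨i, r, Y, by omega, by omega, ?_, by omega, ?_, rfl, ?_⟩, hretrX.symm⟩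
        · have := paired_right (k:ℤ) S hG 0 (b - (l:ℤ)) le_rfl (by omega) (by omega) hl1
            (by rw [← hY]; refine Nat.even_iff.mpr (by omega))
          rwa [← hY] at this
        · intro z hz
          have := (hYmem z).1 hz
          rw [mem_Icc]
          omega
        · rw [hretrX, hcard]
      · -- Subcase C2 : S = Icc 0 b
        have hbl3 : b - (l:ℤ) = -1 := by omega
        have hSfull : S = Finset.Icc (0:ℤ) b := by
          ext z
          rw [mem_Icc]
          constructor
          · intro hz; exact ⟨(hS0 z hz).1, hbmax z hz⟩
          · intro hz; exact hl2 z (by omega) hz.2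
        have hbcard : b = 2*m := by
          have : S.card = (b + 1 - 0).toNat := by rw [hSfull, Int.card_Icc]
          rw [hcard] at this
          omega
        have hretrX : retr k (Finset.Icc (1 - (k:ℤ)) (1 - (k:ℤ) + 2*((m:ℕ):ℤ) - 1)
            ∪ (∅ : Finset ℤ)
            ∪ Finset.Icc (1 - (k:ℤ) + (k:ℤ)) (1 - (k:ℤ) + (k:ℤ) + 2*((m:ℕ):ℤ) - 1)) = S := by
          rw [retr_union, retr_union, retr_Icc _ _ _ (by omega), retr_Icc _ _ _ (by omega)]
          have hre : retr (k:ℤ) (∅ : Finset ℤ) = ∅ := by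
            rw [retr, Finset.image_empty]
          rw [hre]
          have c1 : max 0 (min (k:ℤ) (1 - (k:ℤ))) = 0 := by omega
          have c2 : max 0 (min (k:ℤ) (1 - (k:ℤ) + 2*((m:ℕ):ℤ) - 1)) = 0 := by omega
          have c3 : max 0 (min (k:ℤ) (1 - (k:ℤ) + (k:ℤ))) = 1 := by omega
          have c4 : max 0 (min (k:ℤ) (1 - (k:ℤ) + (k:ℤ) + 2*((m:ℕ):ℤ) - 1)) = 2*(m:ℤ) := by
            omega
          rw [c1, c2, c3, c4, hSfull]
          ext z
          simp [mem_union, mem_Icc]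
          omega
        refine ⟨_, ⟨1 - (k:ℤ), m, ∅, hm, le_rfl, ⟨∅, by simp, by simp⟩, by simp, ?_, rfl, ?_⟩,
          hretrX.symm⟩
        · exact Finset.empty_subset _
        · rw [hretrX, hcard]
    · -- Case A : 0 ∈ S and k ∈ S
      obtain ⟨r, hr⟩ : ∃ r : ℕ, 2*r + 1 = p + q := ⟨(p+q-1)/2, by omega⟩
      have hrz : 2*(r:ℤ) + 1 = (p:ℤ) + (q:ℤ) := by exact_mod_cast hr
      set i : ℤ := 1 - (q:ℤ) with hi
      have hYb : ∀ y ∈ Y0, 0 ≤ y ∧ y ≤ (k:ℤ) := fun y hy => hS0 y (hY0S y hy)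
      have hretrX : retr k (Finset.Icc i (i + 2*(r:ℤ) - 1) ∪ Y0
          ∪ Finset.Icc (i + (k:ℤ)) (i + (k:ℤ) + 2*(r:ℤ) - 1)) = S := by
        rw [retr_union, retr_union, retr_Icc _ _ _ (by omega), retr_Icc _ _ _ (by omega),
          retr_eq_self _ _ hYb]
        have c1 : max 0 (min (k:ℤ) i) = 0 := by omega
        have c2 : max 0 (min (k:ℤ) (i + 2*(r:ℤ) - 1)) = (p:ℤ) - 1 := by omega
        have c3 : max 0 (min (k:ℤ) (i + (k:ℤ))) = (k:ℤ) - (q:ℤ) + 1 := by omega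
        have c4 : max 0 (min (k:ℤ) (i + (k:ℤ) + 2*(r:ℤ) - 1)) = (k:ℤ) := by omega
        rw [c1, c2, c3, c4]
        exact hdecomp.symm
      refine ⟨_, ⟨i, r, Y0, by omega, by omega, ?_, by omega, ?_, rfl, ?_⟩, hretrX.symm⟩
      · have := paired_left (k:ℤ) S hG (p:ℤ) ((k:ℤ)-(q:ℤ)) (by omega) (by omega) hp1
          (by omega) (by rwa [← hY0])
        rwa [← hY0] at this
      · intro z hz
        have := (hY0mem z).1 hz
        rw [mem_Icc]
        omega
      · rw [hretrX, hcard]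


/-- with n = k, every X ∈ 𝒳_k(d,k) has |ret_k(X)| = d, and
ℱ(d,k,k) is exactly the collection of d-element Gale subsets of [0,k]. -/
theorem statement0 (m k : ℕ) (hm : 2 ≤ m) (hk : 2 * m + 1 ≤ k) :
    (∀ X : Finset ℤ, MemX m k k X → (retr k X).card = 2 * m + 1) ∧
    Facets m k k = {F : Finset ℤ | F.card = 2 * m + 1 ∧ IsGale 0 k F} := by
  have hm1 : 1 ≤ m := by omega
  constructor
  · intro X hX
    exact (fwd m k hm1 hk X hX).1
  · ext F
    simp only [Facets, Set.mem_setOf_eq]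
    constructor
    · rintro ⟨X, hX, rfl⟩
      exact ⟨(fwd m k hm1 hk X hX).1, (fwd m k hm1 hk X hX).2⟩
    · rintro ⟨hc, hg⟩
      obtain ⟨X, hX, hFX⟩ := bwd m k hm1 hk F hc hg
      exact ⟨X, hX, hFX⟩
end
end

section
/- If n ≥ k+1 and F ∈ ℱ(d,k,n) with max F ≥ k, then lsh(F) := ret_{n−1}(F − 1) ∈ ℱ(d,k,n−1), where F − 1 = {x − 1 : x ∈ F}. -/
noncomputable section

open Finset

private lemma subOneInj : Function.Injective (· - (1:ℤ)) := fun a b h => by simpa using h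

private lemma img_sub_one_Icc (a b : ℤ) :
    (Finset.Icc a b).image (· - 1) = Finset.Icc (a - 1) (b - 1) := by
  ext x
  simp only [Finset.mem_image, Finset.mem_Icc]
  constructor
  · rintro ⟨y, hy, rfl⟩; omega
  · intro h; exact ⟨x + 1, by omega, by ring⟩

private lemma retr_shift (N : ℤ) (hN : 1 ≤ N) (X : Finset ℤ) :
    retr (N - 1) (X.image (· - 1)) =
      (X.image fun x => max 1 (min N x)).image (· - 1) := by
  simp only [retr, Finset.image_image]
  apply Finset.image_congr
  intro x _
  simp only [Function.comp_apply]
  omega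

/-- if n ≥ k+1 and F ∈ ℱ(d,k,n) with max F ≥ k, then
lsh(F) = ret_{n-1}(F - 1) ∈ ℱ(d,k,n-1). -/
theorem statement1 (m k n : ℕ) (hm : 2 ≤ m) (hk : 2 * m + 1 ≤ k) (hn : k + 1 ≤ n)
    (F : Finset ℤ) (hF : F ∈ Facets m k n) (hmax : (k : ℤ) ≤ maxElt F) :
    retr ((n - 1 : ℕ) : ℤ) (F.image (· - 1)) ∈ Facets m k (n - 1) := by
  obtain ⟨X, ⟨i, r, Y, hr1, hrm, hYp, hYc, hYs, hXeq, hXcard⟩, hFX⟩ := hF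
  have hN1 : (1:ℤ) ≤ (n:ℤ) := by omega
  have hNcast : ((n - 1 : ℕ) : ℤ) = (n:ℤ) - 1 := by omega
  have hYbd : ∀ y ∈ Y, i + 2*(r:ℤ) + 1 ≤ y ∧ y ≤ i + (k:ℤ) - 2 := by
    intro y hy
    have := hYs hy
    rw [Finset.mem_Icc] at this
    omega
  have hXbd : ∀ x ∈ X, i ≤ x ∧ x ≤ i + (k:ℤ) + 2*(r:ℤ) - 1 := by
    intro x hx
    rw [hXeq] at hx
    simp only [Finset.mem_union, Finset.mem_Icc] at hx
    rcases hx with (h | h) | h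
    · omega
    · have := hYbd x h; omega
    · omega
  have hmemF : ∀ x ∈ X, max 0 (min (n:ℤ) x) ∈ F := by
    intro x hx
    rw [hFX]
    exact Finset.mem_image_of_mem _ hx
  have hFmem : ∀ f ∈ F, ∃ x ∈ X, f = max 0 (min (n:ℤ) x) := by
    intro f hf
    rw [hFX] at hf
    simp only [retr, Finset.mem_image] at hf
    obtain ⟨x, hx, h⟩ := hf
    exact ⟨x, hx, h.symm⟩
  have hb : ∀ f ∈ F, 0 ≤ f ∧ f ≤ (n:ℤ) := by
    intro f hf
    obtain ⟨x, hx, rfl⟩ := hFmem f hf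
    omega
  have hcF : 2*m+1 ≤ F.card := by rw [hFX]; exact hXcard
  have hFne : F.Nonempty := Finset.card_pos.mp (by omega)
  have hmaxmem : maxElt F ∈ F := by
    have hcoe : F.max = (F.max' hFne : ℤ) := (Finset.coe_max' hFne).symm
    rw [maxElt, hcoe]
    simpa using F.max'_mem hFne
  have H1 : 0 ≤ i + 2*(r:ℤ) - 1 := by
    obtain ⟨x, hx, hfx⟩ := hFmem _ hmaxmem
    have h1 := hXbd x hx
    omega
  have hFsub : F ⊆ Finset.Icc (max 0 (min (n:ℤ) i)) (n:ℤ) := by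
    intro f hf
    obtain ⟨x, hx, rfl⟩ := hFmem f hf
    have := (hXbd x hx).1
    rw [Finset.mem_Icc]
    omega
  have H2 : i ≤ (n:ℤ) - 2*m := by
    have hle := Finset.card_le_card hFsub
    rw [Int.card_Icc] at hle
    omega
  have himg : (X.image fun x => max 1 (min (n:ℤ) x)) = F.image fun x => max 1 (min (n:ℤ) x) := by
    rw [hFX]
    simp only [retr, Finset.image_image]
    exact (Finset.image_congr fun x _ => by simp only [Function.comp_apply]; omega).symm
  refine ⟨X.image (· - 1), ⟨i - 1, r, Y.image (· - 1), hr1, hrm, ?_, ?_, ?_, ?_, ?_⟩, ?_⟩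
  · -- IsPaired
    obtain ⟨S, hSY, hsep⟩ := hYp
    refine ⟨S.image (· - 1), ?_, ?_⟩
    · rw [hSY, Finset.image_union, Finset.image_image, Finset.image_image]
      congr 1
      apply Finset.image_congr
      intro x _
      simp only [Function.comp_apply]
      omega
    · intro a ha b hb' hab
      simp only [Finset.mem_image] at ha hb'
      obtain ⟨a', ha', rfl⟩ := ha
      obtain ⟨b', hb', rfl⟩ := hb'
      have hne : a' ≠ b' := by omega
      have h2 := hsep a' ha' b' hb' hne
      rw [show a' - 1 - (b' - 1) = a' - b' from by ring]
      exact h2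
  · -- card of Y
    rw [Finset.card_image_of_injective _ subOneInj]
    exact hYc
  · -- subset
    intro x hx
    simp only [Finset.mem_image] at hx
    obtain ⟨y, hy, rfl⟩ := hx
    have := hYbd y hy
    rw [Finset.mem_Icc]
    omega
  · -- structure equation
    rw [hXeq, Finset.image_union, Finset.image_union, img_sub_one_Icc, img_sub_one_Icc]
    congr 1
    · congr 1
      congr 1 <;> ring
    · congr 1 <;> ring
  · -- cardinality bound
    rw [hNcast, retr_shift _ hN1, Finset.card_image_of_injective _ subOneInj, himg]
    by_cases h01 : (0:ℤ) ∈ F ∧ (1:ℤ) ∈ F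
    · obtain ⟨h0, h1⟩ := h01
      have hi0 : i ≤ 0 := by
        obtain ⟨x, hx, hfx⟩ := hFmem 0 h0
        have := hXbd x hx
        omega
      have h1X : (1:ℤ) ∈ X := by
        obtain ⟨x, hx, hfx⟩ := hFmem 1 h1
        have hx1 : x = 1 := by omega
        exact hx1 ▸ hx
      have H3 : 2 - 2*(r:ℤ) ≤ i := by
        rw [hXeq] at h1X
        simp only [Finset.mem_union, Finset.mem_Icc] at h1X
        rcases h1X with (h | h) | h
        · omega
        · have := hYbd 1 h; omega
        · omega
      have hclampmem : ∀ z ∈ X, 0 ≤ z → z ≤ (n:ℤ) → z ∈ F := by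
        intro z hz h0z hzn
        have := hmemF z hz
        rwa [show max 0 (min (n:ℤ) z) = z from by omega] at this
      have hYR : Disjoint Y (Finset.Icc (i+(k:ℤ)) (i+(k:ℤ)+2*(r:ℤ)-1)) := by
        rw [Finset.disjoint_left]
        intro a ha hb'
        have := hYbd a ha
        rw [Finset.mem_Icc] at hb'
        omega
      have hYRcard : (Y ∪ Finset.Icc (i+(k:ℤ)) (i+(k:ℤ)+2*(r:ℤ)-1)).card = 2*(m-r) + (2*r : ℕ) := by
        rw [Finset.card_union_of_disjoint hYR, hYc, Int.card_Icc]
        omega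
      have KEY : 2*m+2 ≤ F.card := by
        by_cases htop : i + (k:ℤ) + 2*(r:ℤ) - 1 ≤ (n:ℤ) - 1
        · -- everything below n
          set G := insert (0:ℤ) (Finset.Icc 1 (i+2*(r:ℤ)-1) ∪
              (Y ∪ Finset.Icc (i+(k:ℤ)) (i+(k:ℤ)+2*(r:ℤ)-1))) with hG
          have hGsub : G ⊆ F := by
            intro z hz
            rw [hG] at hz
            simp only [Finset.mem_insert, Finset.mem_union, Finset.mem_Icc] at hz
            rcases hz with rfl | (hz | (hz | hz))
            · exact h0
            · refine hclampmem z ?_ (by omega) (by omega)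
              rw [hXeq]
              simp only [Finset.mem_union, Finset.mem_Icc]
              exact Or.inl (Or.inl (by omega))
            · have := hYbd z hz
              refine hclampmem z ?_ (by omega) (by omega)
              rw [hXeq]
              exact Finset.mem_union_left _ (Finset.mem_union_right _ hz)
            · refine hclampmem z ?_ (by omega) (by omega)
              rw [hXeq]
              simp only [Finset.mem_union, Finset.mem_Icc]
              exact Or.inr (by omega)
          have hAYR : Disjoint (Finset.Icc (1:ℤ) (i+2*(r:ℤ)-1))
              (Y ∪ Finset.Icc (i+(k:ℤ)) (i+(k:ℤ)+2*(r:ℤ)-1)) := by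
            rw [Finset.disjoint_left]
            intro a ha hb'
            rw [Finset.mem_Icc] at ha
            rcases Finset.mem_union.mp hb' with h | h
            · have := hYbd a h; omega
            · rw [Finset.mem_Icc] at h; omega
          have h0G : (0:ℤ) ∉ (Finset.Icc (1:ℤ) (i+2*(r:ℤ)-1) ∪
              (Y ∪ Finset.Icc (i+(k:ℤ)) (i+(k:ℤ)+2*(r:ℤ)-1))) := by
            simp only [Finset.mem_union, Finset.mem_Icc]
            rintro (h | h | h)
            · omega
            · have := hYbd 0 h; omega
            · omega
          have hGcard : G.card = ((i+2*(r:ℤ)-1+1-1).toNat + (2*(m-r) + (2*r : ℕ))) + 1 := by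
            rw [hG, Finset.card_insert_of_notMem h0G,
              Finset.card_union_of_disjoint hAYR, hYRcard, Int.card_Icc]
          have := Finset.card_le_card hGsub
          rw [hGcard] at this
          omega
        · -- top part clipped at n
          set C := (Y ∪ Finset.Icc (i+(k:ℤ)) (i+(k:ℤ)+2*(r:ℤ)-1)).filter (· ≤ (n:ℤ)-1) with hC
          have hCmem : ∀ z ∈ C, (i + 2*(r:ℤ) + 1 ≤ z ∧ z ≤ (n:ℤ) - 1) := by
            intro z hz
            rw [hC, Finset.mem_filter] at hz
            obtain ⟨hz1, hz2⟩ := hz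
            rcases Finset.mem_union.mp hz1 with h | h
            · have := hYbd z h; omega
            · rw [Finset.mem_Icc] at h; omega
          set G := insert (0:ℤ) (insert ((n:ℤ)) (Finset.Icc 1 (i+2*(r:ℤ)-1) ∪ C)) with hG
          have hGsub : G ⊆ F := by
            intro z hz
            rw [hG] at hz
            simp only [Finset.mem_insert, Finset.mem_union, Finset.mem_Icc] at hz
            rcases hz with rfl | (rfl | (hz | hz))
            · exact h0
            · have hzX : i + (k:ℤ) + 2*(r:ℤ) - 1 ∈ X := by
                rw [hXeq]
                simp only [Finset.mem_union, Finset.mem_Icc]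
                exact Or.inr (by omega)
              have := hmemF _ hzX
              rwa [show max 0 (min (n:ℤ) (i + (k:ℤ) + 2*(r:ℤ) - 1)) = (n:ℤ) from by omega] at this
            · refine hclampmem z ?_ (by omega) (by omega)
              rw [hXeq]
              simp only [Finset.mem_union, Finset.mem_Icc]
              exact Or.inl (Or.inl (by omega))
            · have hzb := hCmem z hz
              have hzX : z ∈ X := by
                rw [hC, Finset.mem_filter] at hz
                rw [hXeq]
                rcases Finset.mem_union.mp hz.1 with h | h
                · exact Finset.mem_union_left _ (Finset.mem_union_right _ h)
                · exact Finset.mem_union_right _ h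
              exact hclampmem z hzX (by omega) (by omega)
          have hAC : Disjoint (Finset.Icc (1:ℤ) (i+2*(r:ℤ)-1)) C := by
            rw [Finset.disjoint_left]
            intro a ha hb'
            rw [Finset.mem_Icc] at ha
            have := hCmem a hb'
            omega
          have hnG : (n:ℤ) ∉ Finset.Icc (1:ℤ) (i+2*(r:ℤ)-1) ∪ C := by
            intro h
            rcases Finset.mem_union.mp h with h | h
            · rw [Finset.mem_Icc] at h; omega
            · have := hCmem _ h; omega
          have h0G : (0:ℤ) ∉ insert ((n:ℤ)) (Finset.Icc (1:ℤ) (i+2*(r:ℤ)-1) ∪ C) := by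
            simp only [Finset.mem_insert, Finset.mem_union, Finset.mem_Icc]
            rintro (h | h | h)
            · omega
            · omega
            · have := hCmem 0 h; omega
          have hCcard : 2*(m-r) + (2*r : ℕ) ≤ C.card + (i + (k:ℤ) + 2*(r:ℤ) - 1 + 1 - (n:ℤ)).toNat := by
            have hsplit := Finset.card_filter_add_card_filter_not
              (s := Y ∪ Finset.Icc (i+(k:ℤ)) (i+(k:ℤ)+2*(r:ℤ)-1)) (p := fun z => z ≤ (n:ℤ)-1)
            have hneg : ((Y ∪ Finset.Icc (i+(k:ℤ)) (i+(k:ℤ)+2*(r:ℤ)-1)).filter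
                (fun z => ¬ z ≤ (n:ℤ)-1)) ⊆ Finset.Icc ((n:ℤ)) (i+(k:ℤ)+2*(r:ℤ)-1) := by
              intro z hz
              rw [Finset.mem_filter] at hz
              obtain ⟨hz1, hz2⟩ := hz
              rw [Finset.mem_Icc]
              rcases Finset.mem_union.mp hz1 with h | h
              · have := hYbd z h; omega
              · rw [Finset.mem_Icc] at h; omega
            have hnegcard := Finset.card_le_card hneg
            rw [Int.card_Icc] at hnegcard
            rw [hYRcard] at hsplit
            rw [hC]
            omega
          have hGcard : G.card = ((i+2*(r:ℤ)-1+1-1).toNat + C.card) + 1 + 1 := by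
            rw [hG, Finset.card_insert_of_notMem h0G, Finset.card_insert_of_notMem hnG,
              Finset.card_union_of_disjoint hAC, Int.card_Icc]
          have := Finset.card_le_card hGsub
          rw [hGcard] at this
          omega
      have himc : F.card - 1 ≤ (F.image fun x => max 1 (min (n:ℤ) x)).card := by
        have hsub : (F.erase 0).image (fun x => max 1 (min (n:ℤ) x)) ⊆
            F.image (fun x => max 1 (min (n:ℤ) x)) :=
          Finset.image_subset_image (Finset.erase_subset _ _)
        have hinj : ((F.erase 0).image (fun x => max 1 (min (n:ℤ) x))).card = (F.erase 0).card := by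
          apply Finset.card_image_of_injOn
          intro x hx y hy hxy
          have hbx := hb x (Finset.mem_of_mem_erase hx)
          have hby := hb y (Finset.mem_of_mem_erase hy)
          have hx0 : x ≠ 0 := Finset.ne_of_mem_erase hx
          have hy0 : y ≠ 0 := Finset.ne_of_mem_erase hy
          have hxy2 : max 1 (min (n:ℤ) x) = max 1 (min (n:ℤ) y) := hxy
          omega
        have hle := Finset.card_le_card hsub
        rw [hinj, Finset.card_erase_of_mem h0] at hle
        omega
      omega
    · have heq : (F.image fun x => max 1 (min (n:ℤ) x)).card = F.card := by
        apply Finset.card_image_of_injOn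
        intro x hx y hy hxy
        have hbx := hb x hx
        have hby := hb y hy
        have hxy2 : max 1 (min (n:ℤ) x) = max 1 (min (n:ℤ) y) := hxy
        rcases not_and_or.mp h01 with h0 | h1
        · have hx0 : x ≠ 0 := fun e => h0 (e ▸ hx)
          have hy0 : y ≠ 0 := fun e => h0 (e ▸ hy)
          omega
        · have hx1 : x ≠ 1 := fun e => h1 (e ▸ hx)
          have hy1 : y ≠ 1 := fun e => h1 (e ▸ hy)
          omega
      rw [heq]
      exact hcF
  · -- retr equality
    rw [hNcast, retr_shift _ hN1, retr_shift _ hN1, himg]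
end
end

section
/- If n ≥ k+1 and F_1, F_2 ∈ ℱ(d,k,n) with max F_1 ≥ k and max F_2 ≥ k, then F_1 ≺_c F_2 implies lsh(F_1) ≺_c lsh(F_2), where lsh(F) = ret_{n−1}(F − 1) and F − 1 = {x − 1 : x ∈ F}. -/
noncomputable section

open Finset

private lemma maxElt_eq_of {F : Finset ℤ} {z : ℤ} (h1 : z ∈ F) (h2 : ∀ t ∈ F, t ≤ z) :
    maxElt F = z := by
  have h3 : F.max = (z : WithBot ℤ) :=
    le_antisymm (Finset.max_le fun t ht => WithBot.coe_le_coe.2 (h2 t ht)) (Finset.le_max h1)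
  simp [maxElt, h3]

private lemma le_maxElt {F : Finset ℤ} {t : ℤ} (h : t ∈ F) : t ≤ maxElt F := by
  have h1 := Finset.le_max h
  cases hF : F.max with
  | bot => simp [hF] at h1
  | coe a => simp [hF] at h1; simpa [maxElt, hF] using h1

private lemma facet_spec {m k n : ℕ} {F : Finset ℤ} (hF : F ∈ Facets m k n) :
    ∃ (i : ℤ) (r : ℕ), 1 ≤ r ∧ r ≤ m ∧
      (∀ t ∈ F, ∃ x, i ≤ x ∧ x ≤ i + k + 2 * r - 1 ∧ max 0 (min (n : ℤ) x) = t) ∧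
      (∀ t : ℤ, 0 < t → t < n → t ∈ F →
        (i ≤ t ∧ t ≤ i + 2 * r - 1) ∨ (i + 2 * r + 1 ≤ t ∧ t ≤ i + k - 2) ∨
          (i + k ≤ t ∧ t ≤ i + k + 2 * r - 1)) ∧
      (∀ t : ℤ, i ≤ t → t ≤ i + 2 * r - 1 → 0 ≤ t → t ≤ n → t ∈ F) ∧
      (∀ t : ℤ, i + k ≤ t → t ≤ i + k + 2 * r - 1 → 0 ≤ t → t ≤ n → t ∈ F) ∧
      (i ≤ 0 → (0 : ℤ) ∈ F) ∧
      maxElt F = max 0 (min (n : ℤ) (i + k + 2 * r - 1)) := by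
  obtain ⟨X, ⟨i, r, Y, hr1, hrm, -, -, hYsub, hXeq, -⟩, rfl⟩ := hF
  have hr1' : (1 : ℤ) ≤ (r : ℤ) := by exact_mod_cast hr1
  have hXmem : ∀ x : ℤ, x ∈ X ↔
      ((i ≤ x ∧ x ≤ i + 2 * r - 1) ∨ x ∈ Y ∨ (i + k ≤ x ∧ x ≤ i + k + 2 * r - 1)) := by
    intro x
    simp [hXeq, Finset.mem_union, Finset.mem_Icc, or_assoc]
  have hXbd : ∀ x ∈ X, i ≤ x ∧ x ≤ i + k + 2 * r - 1 := by
    intro x hx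
    rcases (hXmem x).1 hx with h | h | h
    · omega
    · have := Finset.mem_Icc.1 (hYsub h); omega
    · omega
  have hmemF : ∀ t, t ∈ retr (n : ℤ) X ↔ ∃ x ∈ X, max 0 (min (n : ℤ) x) = t := by
    intro t; simp [retr]
  refine ⟨i, r, hr1, hrm, ?_, ?_, ?_, ?_, ?_, ?_⟩
  · intro t ht
    obtain ⟨x, hx, hcl⟩ := (hmemF t).1 ht
    exact ⟨x, (hXbd x hx).1, (hXbd x hx).2, hcl⟩
  · intro t h0 hn' ht
    obtain ⟨x, hx, hcl⟩ := (hmemF t).1 ht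
    have hxt : x = t := by omega
    subst hxt
    rcases (hXmem x).1 hx with h | h | h
    · exact Or.inl h
    · have := Finset.mem_Icc.1 (hYsub h); exact Or.inr (Or.inl this)
    · exact Or.inr (Or.inr h)
  · intro t h1 h2 h3 h4
    exact (hmemF t).2 ⟨t, (hXmem t).2 (Or.inl ⟨h1, h2⟩), by omega⟩
  · intro t h1 h2 h3 h4
    exact (hmemF t).2 ⟨t, (hXmem t).2 (Or.inr (Or.inr ⟨h1, h2⟩)), by omega⟩
  · intro hi0
    refine (hmemF 0).2 ⟨i, (hXmem i).2 (Or.inl ⟨le_refl i, by omega⟩), by omega⟩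
  · apply maxElt_eq_of
    · exact (hmemF _).2 ⟨i + k + 2 * r - 1,
        (hXmem _).2 (Or.inr (Or.inr ⟨by omega, le_refl _⟩)), rfl⟩
    · intro t ht
      obtain ⟨x, hx, hcl⟩ := (hmemF t).1 ht
      have := hXbd x hx
      omega

private lemma mem_lsh {N : ℤ} {F : Finset ℤ} {u : ℤ} :
    u ∈ retr N (F.image (· - 1)) ↔ ∃ x ∈ F, max 0 (min N (x - 1)) = u := by
  unfold retr
  rw [Finset.image_image]
  simp [Finset.mem_image]

/-- if n ≥ k+1 and F₁, F₂ ∈ ℱ(d,k,n) both have maximum ≥ k, then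
F₁ ≺_c F₂ implies lsh(F₁) ≺_c lsh(F₂), where lsh(F) = ret_{n-1}(F - 1). -/
theorem statement2 (m k n : ℕ) (hm : 2 ≤ m) (hk : 2 * m + 1 ≤ k) (hn : k + 1 ≤ n)
    (F₁ F₂ : Finset ℤ) (h1 : F₁ ∈ Facets m k n) (h2 : F₂ ∈ Facets m k n)
    (hm1 : (k : ℤ) ≤ maxElt F₁) (hm2 : (k : ℤ) ≤ maxElt F₂)
    (hlt : ColexLt F₁ F₂) :
    ColexLt (retr ((n - 1 : ℕ) : ℤ) (F₁.image (· - 1)))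
      (retr ((n - 1 : ℕ) : ℤ) (F₂.image (· - 1))) := by
  obtain ⟨z, hzF2, hzF1, hagree⟩ := hlt
  obtain ⟨i₁, r₁, hr₁1, hr₁m, hrep₁, htri₁, hA₁, hB₁, h0m₁, hmax₁⟩ := facet_spec h1
  obtain ⟨i₂, r₂, hr₂1, hr₂m, hrep₂, htri₂, hA₂, hB₂, h0m₂, hmax₂⟩ := facet_spec h2
  have hr₁1' : (1 : ℤ) ≤ (r₁ : ℤ) := by exact_mod_cast hr₁1
  have hr₂1' : (1 : ℤ) ≤ (r₂ : ℤ) := by exact_mod_cast hr₂1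
  have hr₁m' : (r₁ : ℤ) ≤ (m : ℤ) := by exact_mod_cast hr₁m
  have hr₂m' : (r₂ : ℤ) ≤ (m : ℤ) := by exact_mod_cast hr₂m
  have hm' : (2 : ℤ) ≤ (m : ℤ) := by exact_mod_cast hm
  have hk' : 2 * (m : ℤ) + 1 ≤ (k : ℤ) := by exact_mod_cast hk
  have hkn : (k : ℤ) + 1 ≤ (n : ℤ) := by exact_mod_cast hn
  have hbd1 : ∀ t ∈ F₁, 0 ≤ t ∧ t ≤ (n : ℤ) := by
    intro t ht; obtain ⟨x, -, -, h⟩ := hrep₁ t ht; omega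
  have hbd2 : ∀ t ∈ F₂, 0 ≤ t ∧ t ≤ (n : ℤ) := by
    intro t ht; obtain ⟨x, -, -, h⟩ := hrep₂ t ht; omega
  have hz0 : 0 ≤ z := (hbd2 z hzF2).1
  have hzn : z ≤ (n : ℤ) := (hbd2 z hzF2).2
  -- lsh membership lemmas
  have hL1 : ∀ (F : Finset ℤ), (∀ t ∈ F, 0 ≤ t ∧ t ≤ (n : ℤ)) → ∀ w : ℤ, 1 ≤ w →
      w ≤ (n : ℤ) - 1 → (w ∈ retr ((n - 1 : ℕ) : ℤ) (F.image (· - 1)) ↔ w + 1 ∈ F) := by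
    intro F hbd w hw1 hw2
    rw [mem_lsh]
    constructor
    · rintro ⟨x, hx, hc⟩
      have hb := hbd x hx
      have hxw : x = w + 1 := by omega
      rwa [← hxw]
    · intro h
      exact ⟨w + 1, h, by omega⟩
  have hL2 : ∀ (F : Finset ℤ), (∀ t ∈ F, 0 ≤ t ∧ t ≤ (n : ℤ)) →
      ((0 : ℤ) ∈ retr ((n - 1 : ℕ) : ℤ) (F.image (· - 1)) ↔ (0 : ℤ) ∈ F ∨ (1 : ℤ) ∈ F) := by
    intro F hbd
    rw [mem_lsh]
    constructor
    · rintro ⟨x, hx, hc⟩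
      have hb := hbd x hx
      have : x = 0 ∨ x = 1 := by omega
      rcases this with rfl | rfl
      · exact Or.inl hx
      · exact Or.inr hx
    · rintro (h | h)
      · exact ⟨0, h, by omega⟩
      · exact ⟨1, h, by omega⟩
  have hL3 : ∀ (F : Finset ℤ) (w : ℤ), w ∈ retr ((n - 1 : ℕ) : ℤ) (F.image (· - 1)) →
      0 ≤ w ∧ w ≤ (n : ℤ) - 1 := by
    intro F w h
    obtain ⟨x, -, hc⟩ := mem_lsh.1 h
    omega
  have tail : ∀ c : ℤ, 0 ≤ c → z ≤ c + 1 → ∀ w, c < w →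
      (w ∈ retr ((n - 1 : ℕ) : ℤ) (F₁.image (· - 1)) ↔
        w ∈ retr ((n - 1 : ℕ) : ℤ) (F₂.image (· - 1))) := by
    intro c hc hcz w hw
    by_cases hwn : w ≤ (n : ℤ) - 1
    · rw [hL1 F₁ hbd1 w (by omega) hwn, hL1 F₂ hbd2 w (by omega) hwn]
      exact hagree (w + 1) (by omega)
    · exact iff_of_false (fun h => hwn (hL3 F₁ w h).2) (fun h => hwn (hL3 F₂ w h).2)
  rcases lt_or_ge z 2 with hz2 | hz2
  · have hz01 : z = 0 ∨ z = 1 := by omega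
    rcases hz01 with rfl | rfl
    · -- z = 0
      by_cases h1F1 : (1 : ℤ) ∈ F₁
      · -- bad case 1: contradiction
        exfalso
        have h1F2 : (1 : ℤ) ∈ F₂ := (hagree 1 (by omega)).1 h1F1
        -- F₁: 0 ∉ F₁, 1 ∈ F₁ ⇒ i₁ = 1 ⇒ k ∉ F₁
        have hi₁pos : ¬ i₁ ≤ 0 := fun h => hzF1 (h0m₁ h)
        have hi₁ : i₁ = 1 := by
          rcases htri₁ 1 (by omega) (by omega) h1F1 with h | h | h
          · omega
          · omega
          · -- 1 in right interval: then maxElt F₁ < k, contradiction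
            rw [hmax₁] at hm1; omega
        have hkF1 : (k : ℤ) ∉ F₁ := by
          intro hkF
          rcases htri₁ (k : ℤ) (by omega) (by omega) hkF with h | h | h <;> omega
        -- F₂: 0 ∈ F₂ ⇒ i₂ ≤ 0; maxElt ≥ k ⇒ i₂ + 2r₂ - 1 ≥ 0 ⇒ k ∈ F₂
        have hi₂ : i₂ ≤ 0 := by
          obtain ⟨x, hx1, -, hx3⟩ := hrep₂ 0 hzF2; omega
        have he₂ : 0 ≤ i₂ + 2 * (r₂ : ℤ) - 1 := by
          rw [hmax₂] at hm2; omega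
        have hkF2 : (k : ℤ) ∈ F₂ := hB₂ (k : ℤ) (by omega) (by omega) (by omega) (by omega)
        exact hkF1 ((hagree (k : ℤ) (by omega)).2 hkF2)
      · -- good: witness 0
        have h1F2 : (1 : ℤ) ∉ F₂ := fun h => h1F1 ((hagree 1 (by omega)).2 h)
        refine ⟨0, ?_, ?_, ?_⟩
        · exact (hL2 F₂ hbd2).2 (Or.inl hzF2)
        · intro h
          rcases (hL2 F₁ hbd1).1 h with h' | h'
          · exact hzF1 h'
          · exact h1F1 h'
        · exact tail 0 le_rfl (by omega)
    · -- z = 1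
      by_cases h0F1 : (0 : ℤ) ∈ F₁
      · -- bad case 2: contradiction
        exfalso
        have h1F1 : (1 : ℤ) ∉ F₁ := hzF1
        have hi₁ : i₁ ≤ 0 := by
          obtain ⟨x, hx1, -, hx3⟩ := hrep₁ 0 h0F1; omega
        have he₁ : 0 ≤ i₁ + 2 * (r₁ : ℤ) - 1 := by
          rw [hmax₁] at hm1; omega
        have he₁' : i₁ + 2 * (r₁ : ℤ) - 1 = 0 := by
          by_contra h
          exact h1F1 (hA₁ 1 (by omega) (by omega) (by omega) (by omega))
        have hmax₁' : maxElt F₁ = (k : ℤ) := by rw [hmax₁]; omega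
        have hmax₂' : maxElt F₂ = (k : ℤ) := by
          have hmem : maxElt F₂ ∈ F₂ := by
            have hne : F₂.Nonempty := ⟨1, hzF2⟩
            have h1 := F₂.max'_mem hne
            have h2 : maxElt F₂ = F₂.max' hne := by
              rw [maxElt, ← Finset.coe_max' hne]; rfl
            rwa [h2]
          rcases eq_or_lt_of_le hm2 with h | h
          · exact h.symm
          · exfalso
            have := (hagree (maxElt F₂) (by omega)).2 hmem
            have := le_maxElt this
            omega
        have he₂' : i₂ + 2 * (r₂ : ℤ) - 1 = 0 := by
          rw [hmax₂] at hmax₂'; omega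
        rcases htri₂ 1 (by omega) (by omega) hzF2 with h | h | h <;> omega
      · -- good: witness 0
        refine ⟨0, ?_, ?_, ?_⟩
        · exact (hL2 F₂ hbd2).2 (Or.inr hzF2)
        · intro h
          rcases (hL2 F₁ hbd1).1 h with h' | h'
          · exact h0F1 h'
          · exact hzF1 h'
        · exact tail 0 le_rfl (by omega)
  · -- z ≥ 2 : witness z - 1
    refine ⟨z - 1, ?_, ?_, ?_⟩
    · rw [hL1 F₂ hbd2 (z - 1) (by omega) (by omega)]
      rw [show z - 1 + 1 = z by ring]
      exact hzF2
    · intro h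
      rw [hL1 F₁ hbd1 (z - 1) (by omega) (by omega)] at h
      rw [show z - 1 + 1 = z by ring] at h
      exact hzF1 h
    · exact tail (z - 1) (by omega) (by omega)
end
end
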